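/- arXiv:1101.3627 — 2 statements merged into one kernel-verified Lean document; each statement's English description precedes it below -/
import Mathlib

section
/- Let S ⊆ E^n be nonempty with density ρ(S) ≤ 1/2. If the characteristic function χ^S is a perfect 2-coloring of E^n, then nei(S) + 2(cor(S)+1)(1 − ρ(S)) = n. -/
open Finset

/-- Weight of a vector in the Boolean cube: the number of ones. -/
def wt {n : ℕ} (y : Fin n → Bool) : ℕ := (Finset.univ.filter fun i => y i = true).card

/-- The face `E^n_y(z) = {x : [x,y] = [z,y]}`: all `x` agreeing with `z` on the
support of `y`. -/
def face {n : ℕ} (y z : Fin n → Bool) : Finset (Fin n → Bool) :=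
  Finset.univ.filter fun x => ∀ i, y i = true → x i = z i

/-- `χ^S` is correlation-immune of order `k`: all faces obtained by fixing `k`
coordinates (i.e. faces `E^n_y(z)` with `wt y = k`) intersect `S` in the same
cardinality. -/
def CorrImmune {n : ℕ} (S : Finset (Fin n → Bool)) (k : ℕ) : Prop :=
  ∀ y₁ z₁ y₂ z₂ : Fin n → Bool, wt y₁ = k → wt y₂ = k →
    (face y₁ z₁ ∩ S).card = (face y₂ z₂ ∩ S).card

/-- `cor S` : the maximum order of correlation immunity of `χ^S`. -/
noncomputable def cor {n : ℕ} (S : Finset (Fin n → Bool)) : ℕ :=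
  sSup {k | k ≤ n ∧ CorrImmune S k}

/-- Density `ρ(S) = |S| / 2^n`. -/
def rho {n : ℕ} (S : Finset (Fin n → Bool)) : ℚ := (S.card : ℚ) / 2 ^ n

/-- `nei S`: the average number of neighbors in `S` of vertices of `S`,
`(1/|S|) ∑_{x∈S} |B(x) ∩ S| - 1`, where `B x` is the Hamming ball of radius 1. -/
def nei {n : ℕ} (S : Finset (Fin n → Bool)) : ℚ :=
  (∑ x ∈ S, ((S.filter fun y => hammingDist x y ≤ 1).card : ℚ)) / (S.card : ℚ) - 1

/-- Characteristic function of `S`, as a rational-valued function. -/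
def chi {n : ℕ} (S : Finset (Fin n → Bool)) (x : Fin n → Bool) : ℚ := if x ∈ S then 1 else 0

/-- Characteristic function of `S` as a 2-coloring (color 1 = membership in `S`). -/
def chiCol {n : ℕ} (S : Finset (Fin n → Bool)) (x : Fin n → Bool) : Fin 2 :=
  if x ∈ S then 1 else 0

/-- `Col` is a perfect coloring with parameter matrix `A`: every vertex of color `i`
has exactly `A i j` neighbors (at Hamming distance 1) of color `j`. -/
def IsPerfectColoring {n : ℕ} (Col : (Fin n → Bool) → Fin 2) (A : Fin 2 → Fin 2 → ℕ) : Prop :=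
  ∀ x : Fin n → Bool, ∀ j : Fin 2,
    (Finset.univ.filter fun y => hammingDist x y = 1 ∧ Col y = j).card = A (Col x) j

/-- Fourier transform `â(v) = ∑_u a(u) (-1)^{⟨u,v⟩}`. -/
def fourierT {n : ℕ} (a : (Fin n → Bool) → ℚ) (v : Fin n → Bool) : ℚ :=
  ∑ u : Fin n → Bool, a u * (-1) ^ ((Finset.univ.filter fun i => u i = true ∧ v i = true).card)

/-- Coordinatewise XOR. -/
def xorv {n : ℕ} (u v : Fin n → Bool) : Fin n → Bool := fun i => xor (u i) (v i)

/-- Weight distribution `B_i(a) = (1/|S|) |{(u,v) ∈ S×S : wt(u⊕v) = i}|`. -/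
def Bdist {n : ℕ} (S : Finset (Fin n → Bool)) (i : ℕ) : ℚ :=
  (((S ×ˢ S).filter fun p => wt (xorv p.1 p.2) = i).card : ℚ) / (S.card : ℚ)

/-- Kravchuk polynomial `P_k(i) = ∑_{j=0}^k (-1)^j C(i,j) C(n-i,k-j)`. -/
def krav (n k i : ℕ) : ℚ :=
  ∑ j ∈ Finset.range (k + 1),
    (-1 : ℚ) ^ j * (Nat.choose i j : ℚ) * (Nat.choose (n - i) (k - j) : ℚ)

/-- MacWilliams transform `B'_k(a) = (1/|S|) ∑_{i=0}^n B_i(a) P_k(i)`. -/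
def Bmw {n : ℕ} (S : Finset (Fin n → Bool)) (k : ℕ) : ℚ :=
  (∑ i ∈ Finset.range (n + 1), Bdist S i * krav n k i) / (S.card : ℚ)

def sgn {n : ℕ} (v x : Fin n → Bool) : ℚ :=
  ∏ i, if v i = true ∧ x i = true then -1 else 1

def Ty {n : ℕ} (y : Fin n → Bool) : Finset (Fin n → Bool) :=
  Finset.univ.filter fun v => ∀ i, v i = true → y i = true




lemma sgn_comm {n : ℕ} (v x : Fin n → Bool) : sgn v x = sgn x v := by
  unfold sgn; apply Finset.prod_congr rfl; intro i _
  by_cases h1 : v i = true <;> by_cases h2 : x i = true <;> simp [h1, h2]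

lemma sgn_update {n : ℕ} (v x : Fin n → Bool) (i : Fin n) :
    sgn v (Function.update x i (!x i)) = (if v i = true then -1 else 1) * sgn v x := by
  unfold sgn
  rw [← Finset.mul_prod_erase univ _ (mem_univ i), ← Finset.mul_prod_erase univ
    (fun j => if v j = true ∧ x j = true then (-1:ℚ) else 1) (mem_univ i), ← mul_assoc]
  have hP : (∏ j ∈ univ.erase i,
      if v j = true ∧ Function.update x i (!x i) j = true then (-1:ℚ) else 1) =
      ∏ j ∈ univ.erase i, if v j = true ∧ x j = true then (-1:ℚ) else 1 := by
    apply Finset.prod_congr rfl; intro j hj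
    rw [Function.update_of_ne (Finset.ne_of_mem_erase hj)]
  rw [hP]
  congr 1
  rcases Bool.eq_false_or_eq_true (v i) with h | h <;>
    rcases Bool.eq_false_or_eq_true (x i) with h2 | h2 <;>
    simp [h, h2]

lemma update_not_involutive' {n : ℕ} (x : Fin n → Bool) (i : Fin n) :
    Function.update (Function.update x i (!x i)) i (!(Function.update x i (!x i) i)) = x := by
  funext j
  by_cases hj : j = i
  · subst hj; simp
  · simp [Function.update_of_ne hj]

lemma update_not_ne {n : ℕ} (x : Fin n → Bool) (i : Fin n) :
    Function.update x i (!x i) ≠ x := by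
  intro h
  have := congrFun h i
  simp at this

lemma sum_sgn {n : ℕ} (v : Fin n → Bool) :
    ∑ x : Fin n → Bool, sgn v x = if v = (fun _ => false) then (2^n : ℚ) else 0 := by
  by_cases hv : v = fun _ => false
  · subst hv
    have h1 : ∀ x : Fin n → Bool, sgn (fun _ => false) x = 1 := by
      intro x; unfold sgn; simp
    simp only [h1, Finset.sum_const, card_univ, if_pos rfl]
    simp
  · rw [if_neg hv]
    obtain ⟨i, hi⟩ : ∃ i, v i = true := by
      by_contra h; push_neg at h
      exact hv (funext fun i => by simpa using h i)
    apply Finset.sum_ninvolution (fun x => Function.update x i (!x i))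
    · intro x
      rw [sgn_update, if_pos hi]; ring
    · intro x _
      exact update_not_ne x i
    · intro x; exact mem_univ _
    · intro x; exact update_not_involutive' x i

lemma card_Ty {n : ℕ} (y : Fin n → Bool) : (Ty y).card = 2 ^ wt y := by
  have e : {v : Fin n → Bool // v ∈ Ty y} ≃ ({i : Fin n // y i = true} → Bool) := by
    refine ⟨fun v i => v.1 i.1, fun g => ⟨fun i => if h : y i = true then g ⟨i, h⟩ else false, ?_⟩,
      ?_, ?_⟩
    · simp only [Ty, mem_filter, mem_univ, true_and]
      intro i hi
      by_contra h
      rw [dif_neg h] at hi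
      exact absurd hi (by simp)
    · rintro ⟨v, hv⟩
      simp only [Ty, mem_filter, mem_univ, true_and] at hv
      ext i
      by_cases h : y i = true
      · simp [dif_pos h]
      · simp only [dif_neg h]
        by_contra hvi
        rw [eq_comm, Bool.not_eq_false] at hvi
        exact h (hv i hvi)
    · intro g
      funext i
      simp [i.2]
  have := Fintype.card_congr e
  rw [Fintype.card_coe] at this
  rw [this, Fintype.card_fun, Fintype.card_bool, Fintype.card_subtype]
  rfl

lemma card_face {n : ℕ} (y z : Fin n → Bool) : (face y z).card = 2 ^ (n - wt y) := by
  have e : {x : Fin n → Bool // x ∈ face y z} ≃ ({i : Fin n // y i = false} → Bool) := by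
    refine ⟨fun x i => x.1 i.1,
      fun g => ⟨fun i => if h : y i = false then g ⟨i, h⟩ else z i, ?_⟩, ?_, ?_⟩
    · simp only [face, mem_filter, mem_univ, true_and]
      intro i hi
      rw [dif_neg (by simp [hi])]
    · rintro ⟨x, hx⟩
      simp only [face, mem_filter, mem_univ, true_and] at hx
      ext i
      by_cases h : y i = false
      · simp [dif_pos h]
      · simp only [dif_neg h, Bool.not_eq_false] at *
        exact (hx i h).symm
    · intro g
      funext i
      simp [i.2]
  have := Fintype.card_congr e
  rw [Fintype.card_coe] at this
  rw [this, Fintype.card_fun, Fintype.card_bool, Fintype.card_subtype]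
  have h2 : (univ.filter fun i : Fin n => y i = false) = (univ.filter fun i => y i = true)ᶜ := by
    ext i; simp
  rw [h2, Finset.card_compl]
  simp [wt]

lemma wt_le_of_mem_Ty {n : ℕ} {v y : Fin n → Bool} (h : v ∈ Ty y) : wt v ≤ wt y := by
  simp only [Ty, mem_filter, mem_univ, true_and] at h
  apply Finset.card_le_card
  intro i hi
  simp only [mem_filter, mem_univ, true_and] at *
  exact h i hi

lemma wt_le {n : ℕ} (y : Fin n → Bool) : wt y ≤ n := by
  simpa [wt] using (Finset.card_filter_le univ fun i => y i = true)

lemma sphere_eq {n : ℕ} (y : Fin n → Bool) :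
    (univ.filter fun x => hammingDist y x = 1) =
      univ.image (fun i => Function.update y i (!y i)) := by
  ext x
  simp only [mem_filter, mem_univ, true_and, mem_image]
  constructor
  · intro h
    have h1 : (univ.filter fun i => y i ≠ x i).card = 1 := h
    obtain ⟨i, hi⟩ := Finset.card_eq_one.mp h1
    refine ⟨i, ?_⟩
    have hmem : ∀ j, y j ≠ x j ↔ j ∈ ({i} : Finset (Fin n)) := by
      intro j
      rw [← hi]
      simp
    funext j
    by_cases hj : j = i
    · subst hj
      have : y j ≠ x j := (hmem j).mpr (by simp)
      simp only [Function.update_self]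
      rcases Bool.eq_false_or_eq_true (y j) with h' | h' <;>
        rcases Bool.eq_false_or_eq_true (x j) with h2 | h2 <;> simp_all
    · rw [Function.update_of_ne hj]
      have : ¬ (y j ≠ x j) := fun hc => hj (by simpa using (hmem j).mp hc)
      simpa using this
  · rintro ⟨i, rfl⟩
    show (univ.filter fun j => y j ≠ Function.update y i (!y i) j).card = 1
    have : (univ.filter fun j => y j ≠ Function.update y i (!y i) j) = {i} := by
      ext j
      simp only [mem_filter, mem_univ, true_and, mem_singleton]
      by_cases hj : j = i
      · subst hj; simp
      · rw [Function.update_of_ne hj]; simp [hj]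
    rw [this]; rfl

lemma update_inj {n : ℕ} (y : Fin n → Bool) :
    Function.Injective (fun i => Function.update y i (!y i)) := by
  intro i j h
  by_contra hij
  have := congrFun h i
  simp only [Function.update_self] at this
  rw [Function.update_of_ne hij] at this
  simp at this

lemma sgn_zero {n : ℕ} (x : Fin n → Bool) : sgn (fun _ => false) x = 1 := by
  unfold sgn; simp

lemma sgn_zero' {n : ℕ} (x : Fin n → Bool) : sgn x (fun _ => false) = 1 := by
  rw [sgn_comm]; exact sgn_zero x

lemma sgn_congr {n : ℕ} {v z x : Fin n → Bool} (h : ∀ i, v i = true → z i = x i) :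
    sgn v z = sgn v x := by
  unfold sgn
  apply Finset.prod_congr rfl
  intro i _
  by_cases hv : v i = true
  · rw [h i hv]
  · simp [hv]

lemma zero_mem_Ty {n : ℕ} (y : Fin n → Bool) : (fun _ => false) ∈ Ty y := by
  simp [Ty]

/-- Key indicator identity. -/

lemma indicator_eq {n : ℕ} (y z x : Fin n → Bool) :
    (if x ∈ face y z then ((2:ℚ)^(wt y)) else 0) = ∑ v ∈ Ty y, sgn v x * sgn v z := by
  by_cases hx : x ∈ face y z
  · rw [if_pos hx]
    simp only [face, mem_filter, mem_univ, true_and] at hx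
    have : ∀ v ∈ Ty y, sgn v x * sgn v z = 1 := by
      intro v hv
      simp only [Ty, mem_filter, mem_univ, true_and] at hv
      have : sgn v x = sgn v z := sgn_congr fun i hi => (hx i (hv i hi))
      rw [this]
      unfold sgn
      rw [← Finset.prod_mul_distrib]
      apply Finset.prod_eq_one
      intro i _
      by_cases h1 : v i = true ∧ z i = true <;> simp [h1]
    rw [Finset.sum_congr rfl this, Finset.sum_const, card_Ty]
    simp
  · rw [if_neg hx]
    simp only [face, mem_filter, mem_univ, true_and] at hx
    push_neg at hx
    obtain ⟨i₀, hy₀, hxz⟩ := hx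
    symm
    apply Finset.sum_involution (fun v _ => Function.update v i₀ (!v i₀))
    · intro v _
      have h1 : sgn (Function.update v i₀ (!v i₀)) x = (if x i₀ = true then -1 else 1) * sgn v x := by
        rw [sgn_comm, sgn_update, sgn_comm]
      have h2 : sgn (Function.update v i₀ (!v i₀)) z = (if z i₀ = true then -1 else 1) * sgn v z := by
        rw [sgn_comm, sgn_update, sgn_comm]
      rw [h1, h2]
      have : (if x i₀ = true then (-1:ℚ) else 1) * (if z i₀ = true then -1 else 1) = -1 := by
        rcases Bool.eq_false_or_eq_true (x i₀) with h | h <;>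
          rcases Bool.eq_false_or_eq_true (z i₀) with h' | h' <;> simp_all
      linear_combination (sgn v x * sgn v z) * this
    · intro v _ _; exact update_not_ne v i₀
    · intro v _; exact update_not_involutive' v i₀
    · intro v hv
      simp only [Ty, mem_filter, mem_univ, true_and] at hv ⊢
      intro i hi
      by_cases h : i = i₀
      · subst h; exact hy₀
      · rw [Function.update_of_ne h] at hi
        exact hv i hi

lemma face_card_eq {n : ℕ} (S : Finset (Fin n → Bool)) (y z : Fin n → Bool) :
    ((face y z ∩ S).card : ℚ) * 2^(wt y) = ∑ v ∈ Ty y, (∑ x ∈ S, sgn v x) * sgn v z := by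
  have h1 : face y z ∩ S = S.filter (· ∈ face y z) := by
    rw [Finset.filter_mem_eq_inter, Finset.inter_comm]
  rw [h1, Finset.card_filter]
  push_cast
  rw [Finset.sum_mul]
  have h2 : ∀ x ∈ S, (if x ∈ face y z then (1:ℚ) else 0) * 2^(wt y)
      = ∑ v ∈ Ty y, sgn v x * sgn v z := by
    intro x _
    rw [← indicator_eq]
    by_cases h : x ∈ face y z <;> simp [h]
  rw [Finset.sum_congr rfl h2, Finset.sum_comm]
  apply Finset.sum_congr rfl
  intro v _
  rw [Finset.sum_mul]

lemma immune_of_F {n : ℕ} (S : Finset (Fin n → Bool)) (m : ℕ)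
    (hF : ∀ v : Fin n → Bool, v ≠ (fun _ => false) → wt v ≤ m → ∑ x ∈ S, sgn v x = 0) :
    CorrImmune S m := by
  have key : ∀ y z, wt y = m → ((face y z ∩ S).card : ℚ) * 2^m = S.card := by
    intro y z hy
    rw [← hy, face_card_eq]
    rw [Finset.sum_eq_single (fun _ => false)]
    · simp [sgn_zero, sgn_zero']
    · intro v hv hne
      rw [hF v hne (hy ▸ wt_le_of_mem_Ty hv)]
      ring
    · intro h
      exact absurd (zero_mem_Ty y) h
  intro y₁ z₁ y₂ z₂ h₁ h₂
  have e1 := key y₁ z₁ h₁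
  have e2 := key y₂ z₂ h₂
  have : ((face y₁ z₁ ∩ S).card : ℚ) = (face y₂ z₂ ∩ S).card :=
    mul_right_cancel₀ (by positivity : (2:ℚ)^m ≠ 0) (e1.trans e2.symm)
  exact_mod_cast this

lemma F_zero_of_immune {n : ℕ} (S : Finset (Fin n → Bool)) (v : Fin n → Bool)
    (hv : v ≠ (fun _ => false)) (himm : CorrImmune S (wt v)) :
    ∑ x ∈ S, sgn v x = 0 := by
  have key : ∀ z, ((face v z ∩ S).card : ℚ) = ((face v (fun _ => false) ∩ S).card : ℚ) := by
    intro z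
    exact_mod_cast himm v z v (fun _ => false) rfl rfl
  have hA : ∑ z : Fin n → Bool, sgn v z * ((face v z ∩ S).card : ℚ) = 0 := by
    have : ∀ z : Fin n → Bool, sgn v z * ((face v z ∩ S).card : ℚ)
        = sgn v z * ((face v (fun _ => false) ∩ S).card : ℚ) := fun z => by rw [key z]
    rw [Finset.sum_congr rfl (fun z _ => this z), ← Finset.sum_mul, sum_sgn, if_neg hv,
      zero_mul]
  -- other evaluation
  have hB : ∑ z : Fin n → Bool, sgn v z * ((face v z ∩ S).card : ℚ)
      = 2^(n - wt v) * ∑ x ∈ S, sgn v x := by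
    have h1 : ∀ z, ((face v z ∩ S).card : ℚ) = ∑ x ∈ S, if x ∈ face v z then (1:ℚ) else 0 := by
      intro z
      have : face v z ∩ S = S.filter (· ∈ face v z) := by
        rw [Finset.filter_mem_eq_inter, Finset.inter_comm]
      rw [this, Finset.card_filter]
      push_cast
      rfl

    calc ∑ z : Fin n → Bool, sgn v z * ((face v z ∩ S).card : ℚ)
        = ∑ z : Fin n → Bool, ∑ x ∈ S, (if x ∈ face v z then sgn v z else 0) := by
          apply Finset.sum_congr rfl; intro z _
          rw [h1, Finset.mul_sum]
          apply Finset.sum_congr rfl; intro x _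
          by_cases h : x ∈ face v z <;> simp [h]
      _ = ∑ x ∈ S, ∑ z : Fin n → Bool, (if x ∈ face v z then sgn v z else 0) :=
          Finset.sum_comm
      _ = ∑ x ∈ S, ∑ z : Fin n → Bool, (if z ∈ face v x then sgn v z else 0) := by
          apply Finset.sum_congr rfl; intro x _
          apply Finset.sum_congr rfl; intro z _
          have : x ∈ face v z ↔ z ∈ face v x := by
            simp only [face, mem_filter, mem_univ, true_and]
            constructor <;> exact fun h i hi => (h i hi).symm
          simp only [this]
      _ = ∑ x ∈ S, ∑ z ∈ face v x, sgn v z := by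
          apply Finset.sum_congr rfl; intro x _
          rw [Finset.sum_ite_mem, Finset.univ_inter]
      _ = ∑ x ∈ S, ∑ z ∈ face v x, sgn v x := by
          apply Finset.sum_congr rfl; intro x _
          apply Finset.sum_congr rfl; intro z hz
          simp only [face, mem_filter, mem_univ, true_and] at hz
          exact sgn_congr hz
      _ = ∑ x ∈ S, (2:ℚ)^(n - wt v) * sgn v x := by
          apply Finset.sum_congr rfl; intro x _
          rw [Finset.sum_const, card_face]
          ring
      _ = 2^(n - wt v) * ∑ x ∈ S, sgn v x := by rw [Finset.mul_sum]
  rw [hB] at hA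
  have h2 : (2:ℚ)^(n - wt v) ≠ 0 := by positivity
  exact (mul_eq_zero.mp hA).resolve_left h2

lemma sgn_mul {n : ℕ} (v u w : Fin n → Bool) :
    sgn v u * sgn v w = sgn v (fun i => xor (u i) (w i)) := by
  unfold sgn
  rw [← Finset.prod_mul_distrib]
  apply Finset.prod_congr rfl
  intro i _
  rcases Bool.eq_false_or_eq_true (v i) with h | h <;>
    rcases Bool.eq_false_or_eq_true (u i) with h1 | h1 <;>
    rcases Bool.eq_false_or_eq_true (w i) with h2 | h2 <;> simp [h, h1, h2]

lemma all_F_zero_contra {n : ℕ} (S : Finset (Fin n → Bool)) (x₀ : Fin n → Bool) (hx₀ : x₀ ∈ S)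
    (hF : ∀ v : Fin n → Bool, v ≠ (fun _ => false) → ∑ x ∈ S, sgn v x = 0) :
    (S.card : ℚ) = 2^n := by
  have key : ∑ v : Fin n → Bool, (∑ u ∈ S, sgn v u) * sgn v x₀ = (S.card : ℚ) := by
    rw [Finset.sum_eq_single (fun _ => false)]
    · simp [sgn_zero, sgn_zero']
    · intro v _ hv
      rw [hF v hv, zero_mul]
    · intro h; exact absurd (mem_univ _) h
  have key2 : ∑ v : Fin n → Bool, (∑ u ∈ S, sgn v u) * sgn v x₀ = 2^n := by
    calc ∑ v : Fin n → Bool, (∑ u ∈ S, sgn v u) * sgn v x₀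
        = ∑ v : Fin n → Bool, ∑ u ∈ S, sgn v u * sgn v x₀ := by
          apply Finset.sum_congr rfl; intro v _; rw [Finset.sum_mul]
      _ = ∑ u ∈ S, ∑ v : Fin n → Bool, sgn v u * sgn v x₀ := Finset.sum_comm
      _ = ∑ u ∈ S, ∑ v : Fin n → Bool, sgn (fun i => xor (u i) (x₀ i)) v := by
          apply Finset.sum_congr rfl; intro u _
          apply Finset.sum_congr rfl; intro v _
          rw [sgn_mul, sgn_comm]
      _ = ∑ u ∈ S, (if (fun i => xor (u i) (x₀ i)) = (fun _ => false) then (2^n:ℚ) else 0) := by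
          apply Finset.sum_congr rfl; intro u _
          exact sum_sgn _
      _ = ∑ u ∈ S, (if u = x₀ then (2^n:ℚ) else 0) := by
          apply Finset.sum_congr rfl; intro u _
          congr 1
          simp only [eq_iff_iff]
          constructor
          · intro h
            funext i
            have := congrFun h i
            rcases Bool.eq_false_or_eq_true (u i) with h1 | h1 <;>
              rcases Bool.eq_false_or_eq_true (x₀ i) with h2 | h2 <;> simp_all
          · intro h; subst h; funext i; simp
      _ = 2^n := by rw [Finset.sum_ite_eq' S x₀ (fun _ => (2^n:ℚ)), if_pos hx₀]
  rw [key] at key2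
  exact key2

lemma chiCol_eq_one {n : ℕ} (S : Finset (Fin n → Bool)) (y : Fin n → Bool) :
    chiCol S y = 1 ↔ y ∈ S := by
  unfold chiCol
  by_cases h : y ∈ S <;> simp [h]

lemma chiCol_eq_zero {n : ℕ} (S : Finset (Fin n → Bool)) (y : Fin n → Bool) :
    chiCol S y = 0 ↔ y ∉ S := by
  unfold chiCol
  by_cases h : y ∈ S <;> simp [h]

lemma flip_involutive {n : ℕ} (i : Fin n) :
    Function.Involutive (fun x : Fin n → Bool => Function.update x i (!x i)) :=
  fun x => update_not_involutive' x i

lemma sum_flip {n : ℕ} (i : Fin n) (f : (Fin n → Bool) → ℚ) :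
    ∑ x : Fin n → Bool, f (Function.update x i (!x i)) = ∑ x : Fin n → Bool, f x :=
  Equiv.sum_comp (flip_involutive i).toPerm f

/-- the count of `y ∈ S` at distance 1 from `x`, as a filter over `S`. -/

lemma filter_dist_S {n : ℕ} (S : Finset (Fin n → Bool)) (A : Fin 2 → Fin 2 → ℕ)
    (hA : IsPerfectColoring (chiCol S) A) (x : Fin n → Bool) :
    (S.filter fun y => hammingDist x y = 1).card = A (chiCol S x) 1 := by
  rw [← hA x 1]
  congr 1
  ext y
  simp only [mem_filter, mem_univ, true_and, chiCol_eq_one]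
  tauto

lemma filter_dist_notS {n : ℕ} (S : Finset (Fin n → Bool)) (A : Fin 2 → Fin 2 → ℕ)
    (hA : IsPerfectColoring (chiCol S) A) (x : Fin n → Bool) :
    ((univ \ S).filter fun y => hammingDist x y = 1).card = A (chiCol S x) 0 := by
  rw [← hA x 0]
  congr 1
  ext y
  simp only [mem_filter, mem_univ, true_and, mem_sdiff, chiCol_eq_zero]
  tauto

lemma neighbor_sum {n : ℕ} (S : Finset (Fin n → Bool)) (A : Fin 2 → Fin 2 → ℕ)
    (hA : IsPerfectColoring (chiCol S) A) (x : Fin n → Bool) :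
    ∑ y ∈ univ.filter (fun y => hammingDist x y = 1), (if y ∈ S then (1:ℚ) else 0)
      = ((A 1 1 : ℚ) - A 0 1) * (if x ∈ S then 1 else 0) + A 0 1 := by
  have h1 : ∑ y ∈ univ.filter (fun y => hammingDist x y = 1), (if y ∈ S then (1:ℚ) else 0)
      = ((S.filter fun y => hammingDist x y = 1).card : ℚ) := by
    rw [Finset.sum_ite_mem]
    have he : filter (fun y => hammingDist x y = 1) univ ∩ S
        = S.filter fun y => hammingDist x y = 1 := by
      ext y; simp [and_comm]
    rw [he, Finset.sum_const]
    simp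
  rw [h1, filter_dist_S S A hA x]
  by_cases h : x ∈ S
  · rw [if_pos h, (chiCol_eq_one S x).mpr h]
    ring
  · rw [if_neg h]
    have : chiCol S x = 0 := (chiCol_eq_zero S x).mpr h
    rw [this]
    ring

lemma sum_signs {n : ℕ} (v : Fin n → Bool) :
    ∑ i : Fin n, (if v i = true then (-1:ℚ) else 1) = (n : ℚ) - 2 * wt v := by
  rw [Finset.sum_ite, Finset.sum_const, Finset.sum_const]
  have h1 : (univ.filter fun i => ¬ v i = true).card = n - wt v := by
    have : (univ.filter fun i : Fin n => ¬ v i = true)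
        = (univ.filter fun i => v i = true)ᶜ := by
      ext i; simp
    rw [this, Finset.card_compl]
    simp [wt]
  rw [h1]
  show (wt v) • (-1:ℚ) + ((n - wt v) • (1:ℚ)) = (n:ℚ) - 2 * wt v
  rw [nsmul_eq_mul, nsmul_eq_mul, Nat.cast_sub (wt_le v)]
  ring

lemma eigen {n : ℕ} (S : Finset (Fin n → Bool)) (A : Fin 2 → Fin 2 → ℕ)
    (hA : IsPerfectColoring (chiCol S) A) (v : Fin n → Bool) (hv : v ≠ fun _ => false) :
    ((n:ℚ) - 2 * wt v) * (∑ x ∈ S, sgn v x) = ((A 1 1 : ℚ) - A 0 1) * (∑ x ∈ S, sgn v x) := by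
  set χ : (Fin n → Bool) → ℚ := fun y => if y ∈ S then 1 else 0 with hχ
  have hFχ : ∑ x : Fin n → Bool, sgn v x * χ x = ∑ x ∈ S, sgn v x := by
    simp only [hχ, mul_ite, mul_one, mul_zero]
    rw [Finset.sum_ite_mem, Finset.univ_inter]
  have pathA : ∑ x : Fin n → Bool, sgn v x *
      (∑ y ∈ univ.filter (fun y => hammingDist x y = 1), χ y)
      = ((A 1 1 : ℚ) - A 0 1) * (∑ x ∈ S, sgn v x) := by
    have h1 : ∀ x : Fin n → Bool, sgn v x *
        (∑ y ∈ univ.filter (fun y => hammingDist x y = 1), χ y)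
        = ((A 1 1 : ℚ) - A 0 1) * (sgn v x * χ x) + (A 0 1 : ℚ) * sgn v x := by
      intro x
      rw [neighbor_sum S A hA x]
      show sgn v x * (((A 1 1 : ℚ) - A 0 1) * χ x + A 0 1) = _
      ring
    rw [Finset.sum_congr rfl (fun x _ => h1 x), Finset.sum_add_distrib, ← Finset.mul_sum,
      ← Finset.mul_sum, hFχ, sum_sgn, if_neg hv, mul_zero, add_zero]
  have pathB : ∑ x : Fin n → Bool, sgn v x *
      (∑ y ∈ univ.filter (fun y => hammingDist x y = 1), χ y)
      = ((n:ℚ) - 2 * wt v) * (∑ x ∈ S, sgn v x) := by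
    have h1 : ∀ x : Fin n → Bool, sgn v x *
        (∑ y ∈ univ.filter (fun y => hammingDist x y = 1), χ y)
        = ∑ i : Fin n, sgn v x * χ (Function.update x i (!x i)) := by
      intro x
      rw [sphere_eq x, Finset.sum_image (fun i _ j _ h => update_inj x h), Finset.mul_sum]
    rw [Finset.sum_congr rfl (fun x _ => h1 x), Finset.sum_comm]
    have h2 : ∀ i : Fin n, ∑ x : Fin n → Bool, sgn v x * χ (Function.update x i (!x i))
        = (if v i = true then (-1:ℚ) else 1) * ∑ x ∈ S, sgn v x := by
      intro i
      have h3 : ∑ x : Fin n → Bool, sgn v x * χ (Function.update x i (!x i))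
          = ∑ x : Fin n → Bool, sgn v (Function.update x i (!x i)) * χ x := by
        rw [← sum_flip i (fun x => sgn v (Function.update x i (!x i)) * χ x)]
        apply Finset.sum_congr rfl
        intro x _
        rw [update_not_involutive']
      rw [h3]
      have h4 : ∀ x : Fin n → Bool, sgn v (Function.update x i (!x i)) * χ x
          = (if v i = true then (-1:ℚ) else 1) * (sgn v x * χ x) := by
        intro x
        rw [sgn_update]
        ring
      rw [Finset.sum_congr rfl (fun x _ => h4 x), ← Finset.mul_sum, hFχ]
    rw [Finset.sum_congr rfl (fun i _ => h2 i), ← Finset.sum_mul, sum_signs]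
  rw [← pathA, pathB]

lemma wt_update_true {n : ℕ} {y : Fin n → Bool} {i : Fin n} (h : y i = false) :
    wt (Function.update y i true) = wt y + 1 := by
  unfold wt
  have : (univ.filter fun j => Function.update y i true j = true)
      = insert i (univ.filter fun j => y j = true) := by
    ext j
    simp only [mem_filter, mem_univ, true_and, mem_insert]
    by_cases hj : j = i
    · subst hj; simp
    · rw [Function.update_of_ne hj]
      simp [hj]
  rw [this, Finset.card_insert_of_notMem (by simp [h])]

lemma face_split {n : ℕ} (y z : Fin n → Bool) {i : Fin n} (h : y i = false) :
    face y z = face (Function.update y i true) (Function.update z i false)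
      ∪ face (Function.update y i true) (Function.update z i true) := by
  ext x
  simp only [face, mem_filter, mem_univ, true_and, mem_union]
  constructor
  · intro hx
    have key : ∀ b : Bool, x i = b →
        (∀ j, Function.update y i true j = true → x j = Function.update z i b j) := by
      intro b hb j hj
      by_cases hji : j = i
      · subst hji; simp [hb]
      · rw [Function.update_of_ne hji] at hj ⊢
        exact hx j hj
    rcases Bool.eq_false_or_eq_true (x i) with hb | hb
    · right; exact key true hb
    · left; exact key false hb
  · intro hx j hj
    have hji : j ≠ i := fun hc => by subst hc; rw [h] at hj; exact Bool.false_ne_true hj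
    rcases hx with hx | hx <;>
    · have := hx j (by rw [Function.update_of_ne hji]; exact hj)
      rwa [Function.update_of_ne hji] at this

lemma face_split_disj {n : ℕ} (y z : Fin n → Bool) (i : Fin n) :
    Disjoint (face (Function.update y i true) (Function.update z i false))
      (face (Function.update y i true) (Function.update z i true)) := by
  rw [Finset.disjoint_left]
  intro x hx hx'
  simp only [face, mem_filter, mem_univ, true_and] at hx hx'
  have h1 := hx i (by simp)
  have h2 := hx' i (by simp)
  simp only [Function.update_self] at h1 h2
  rw [h1] at h2
  exact Bool.false_ne_true h2

lemma exists_false_coord {n : ℕ} {y : Fin n → Bool} (h : wt y < n) : ∃ i, y i = false := by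
  by_contra hc
  push_neg at hc
  have : ∀ i, y i = true := fun i => by
    rcases Bool.eq_false_or_eq_true (y i) with h' | h'
    · exact h'
    · exact absurd h' (hc i)
  have : (univ.filter fun i => y i = true) = univ := by
    apply Finset.filter_true_of_mem
    intro i _; exact this i
  unfold wt at h
  rw [this, Finset.card_univ, Fintype.card_fin] at h
  exact lt_irrefl _ h

lemma immune_step {n : ℕ} (S : Finset (Fin n → Bool)) (m : ℕ) (hm : m + 1 ≤ n)
    (h : CorrImmune S (m + 1)) : CorrImmune S m := by
  have key : ∀ y z y' z', wt y = m → wt y' = m →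
      (face y z ∩ S).card = (face y' z' ∩ S).card := by
    intro y z y' z' hy hy'
    obtain ⟨i, hi⟩ := exists_false_coord (n := n) (y := y) (hy ▸ hm)
    obtain ⟨i', hi'⟩ := exists_false_coord (n := n) (y := y') (hy' ▸ hm)
    rw [face_split y z hi, face_split y' z' hi',
      Finset.union_inter_distrib_right, Finset.union_inter_distrib_right,
      Finset.card_union_of_disjoint
        (Finset.disjoint_of_subset_left Finset.inter_subset_left
          (Finset.disjoint_of_subset_right Finset.inter_subset_left (face_split_disj y z i))),
      Finset.card_union_of_disjoint
        (Finset.disjoint_of_subset_left Finset.inter_subset_left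
          (Finset.disjoint_of_subset_right Finset.inter_subset_left (face_split_disj y' z' i')))]
    have w1 : wt (Function.update y i true) = m + 1 := by rw [wt_update_true hi, hy]
    have w2 : wt (Function.update y' i' true) = m + 1 := by rw [wt_update_true hi', hy']
    rw [h _ (Function.update z i false) _ (Function.update z' i' false) w1 w2,
      h _ (Function.update z i true) _ (Function.update z' i' true) w1 w2]
  intro y₁ z₁ y₂ z₂ h₁ h₂
  exact key y₁ z₁ y₂ z₂ h₁ h₂

lemma immune_down {n : ℕ} (S : Finset (Fin n → Bool)) :
    ∀ b, b ≤ n → CorrImmune S b → ∀ a, a ≤ b → CorrImmune S a := by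
  intro b
  induction b with
  | zero => intro _ h a ha; rw [Nat.le_zero.mp ha]; exact h
  | succ b ih =>
    intro hb h a ha
    rcases Nat.lt_or_ge a (b+1) with h' | h'
    · exact ih (by omega) (immune_step S b hb h) a (by omega)
    · have : a = b + 1 := by omega
      rw [this]; exact h

lemma degree {n : ℕ} (x : Fin n → Bool) :
    (univ.filter fun y => hammingDist x y = 1).card = n := by
  rw [sphere_eq x, Finset.card_image_of_injective _ (update_inj x), Finset.card_univ,
    Fintype.card_fin]

lemma ball_card {n : ℕ} (S : Finset (Fin n → Bool)) (A : Fin 2 → Fin 2 → ℕ)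
    (hA : IsPerfectColoring (chiCol S) A) {x : Fin n → Bool} (hx : x ∈ S) :
    (S.filter fun y => hammingDist x y ≤ 1).card = A 1 1 + 1 := by
  have h1 : (S.filter fun y => hammingDist x y ≤ 1)
      = insert x (S.filter fun y => hammingDist x y = 1) := by
    ext y
    simp only [mem_filter, mem_insert]
    constructor
    · rintro ⟨hy, hd⟩
      rcases Nat.le_one_iff_eq_zero_or_eq_one.mp hd with h | h
      · left; exact (hammingDist_eq_zero.mp h).symm
      · right; exact ⟨hy, h⟩
    · rintro (rfl | ⟨hy, hd⟩)
      · exact ⟨hx, by simp⟩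
      · exact ⟨hy, by omega⟩
  rw [h1, Finset.card_insert_of_notMem (by simp), filter_dist_S S A hA x,
    (chiCol_eq_one S x).mpr hx]

lemma nei_eq {n : ℕ} (S : Finset (Fin n → Bool)) (hS : S.Nonempty) (A : Fin 2 → Fin 2 → ℕ)
    (hA : IsPerfectColoring (chiCol S) A) : nei S = A 1 1 := by
  unfold nei
  have h1 : ∀ x ∈ S, ((S.filter fun y => hammingDist x y ≤ 1).card : ℚ) = (A 1 1 : ℚ) + 1 := by
    intro x hx
    rw [ball_card S A hA hx]
    push_cast
    ring
  rw [Finset.sum_congr rfl h1, Finset.sum_const, nsmul_eq_mul]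
  have hs : (S.card : ℚ) ≠ 0 := by
    simp [Finset.card_ne_zero_of_mem hS.choose_spec]
  field_simp
  ring

lemma deg_sum {n : ℕ} (S : Finset (Fin n → Bool)) (A : Fin 2 → Fin 2 → ℕ)
    (hA : IsPerfectColoring (chiCol S) A) {x : Fin n → Bool} (hx : x ∈ S) :
    A 1 1 + A 1 0 = n := by
  have h1 : (univ.filter fun y => hammingDist x y = 1)
      = (S.filter fun y => hammingDist x y = 1)
        ∪ ((univ \ S).filter fun y => hammingDist x y = 1) := by
    ext y
    simp only [mem_filter, mem_union, mem_univ, mem_sdiff, true_and]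
    by_cases h : y ∈ S <;> tauto
  have h2 : Disjoint (S.filter fun y => hammingDist x y = 1)
      ((univ \ S).filter fun y => hammingDist x y = 1) := by
    rw [Finset.disjoint_left]
    intro a ha ha'
    simp only [mem_filter, mem_sdiff] at ha ha'
    exact ha'.1.2 ha.1
  have h3 := degree (n := n) x
  rw [h1, Finset.card_union_of_disjoint h2, filter_dist_S S A hA x,
    filter_dist_notS S A hA x, (chiCol_eq_one S x).mpr hx] at h3
  exact h3

lemma edge_count {n : ℕ} (S : Finset (Fin n → Bool)) (A : Fin 2 → Fin 2 → ℕ)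
    (hA : IsPerfectColoring (chiCol S) A) :
    S.card * A 1 0 = (univ \ S).card * A 0 1 := by
  have key : ∑ x ∈ S, ∑ y ∈ univ \ S, (if hammingDist x y = 1 then 1 else 0)
      = ∑ y ∈ univ \ S, ∑ x ∈ S, (if hammingDist x y = 1 then (1:ℕ) else 0) :=
    Finset.sum_comm
  have hL : ∀ x ∈ S, ∑ y ∈ univ \ S, (if hammingDist x y = 1 then (1:ℕ) else 0) = A 1 0 := by
    intro x hx
    rw [← Finset.card_filter, filter_dist_notS S A hA x, (chiCol_eq_one S x).mpr hx]
  have hR : ∀ y ∈ univ \ S, ∑ x ∈ S, (if hammingDist x y = 1 then (1:ℕ) else 0) = A 0 1 := by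
    intro y hy
    rw [← Finset.card_filter]
    have : (S.filter fun x => hammingDist x y = 1) = S.filter fun x => hammingDist y x = 1 := by
      apply Finset.filter_congr
      intro x _
      rw [hammingDist_comm]
    rw [this, filter_dist_S S A hA y, (chiCol_eq_zero S y).mpr (by simpa using (mem_sdiff.mp hy).2)]
  rw [Finset.sum_congr rfl hL, Finset.sum_congr rfl hR, Finset.sum_const, Finset.sum_const,
    smul_eq_mul, smul_eq_mul] at key
  exact key

lemma wt_eq_zero {n : ℕ} {v : Fin n → Bool} (h : wt v = 0) : v = fun _ => false := by
  unfold wt at h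
  rw [Finset.card_eq_zero] at h
  funext i
  by_contra hc
  have : i ∈ univ.filter fun i => v i = true := by
    simp only [mem_filter, mem_univ, true_and]
    rcases Bool.eq_false_or_eq_true (v i) with h' | h'
    · exact h'
    · exact absurd h' (by simpa using hc)
  rw [h] at this
  exact absurd this (Finset.notMem_empty i)

/-- For nonempty `S ⊆ E^n` with `ρ(S) ≤ 1/2`, if `χ^S` is a perfect
2-coloring then `nei(S) + 2(cor(S)+1)(1 - ρ(S)) = n`. -/
theorem stmt2 {n : ℕ} (S : Finset (Fin n → Bool)) (hS : S.Nonempty) (hρ : rho S ≤ 1 / 2)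
    (hperf : ∃ A : Fin 2 → Fin 2 → ℕ, IsPerfectColoring (chiCol S) A) :
    nei S + 2 * ((cor S : ℚ) + 1) * (1 - rho S) = (n : ℚ) := by
  obtain ⟨A, hA⟩ := hperf
  obtain ⟨x₀, hx₀⟩ := hS
  have h2n : (2:ℚ)^n ≠ 0 := by positivity
  have exv : ∃ v : Fin n → Bool, v ≠ (fun _ => false) ∧ ∑ x ∈ S, sgn v x ≠ 0 := by
    by_contra hc
    push_neg at hc
    have := all_F_zero_contra S x₀ hx₀ (fun v hv => hc v hv)
    rw [rho, this, div_self h2n] at hρ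
    norm_num at hρ
  obtain ⟨v₀, hv₀, hF₀⟩ := exv
  set k := wt v₀ with hk
  have hk1 : 1 ≤ k := by
    rcases Nat.eq_zero_or_pos k with h | h
    · exact absurd (wt_eq_zero h) hv₀
    · exact h
  have hkn : k ≤ n := wt_le v₀
  have htheta : (n:ℚ) - 2*k = (A 1 1 : ℚ) - A 0 1 :=
    mul_right_cancel₀ hF₀ (eigen S A hA v₀ hv₀)
  have hFzero : ∀ v : Fin n → Bool, v ≠ (fun _ => false) → wt v ≠ k →
      ∑ x ∈ S, sgn v x = 0 := by
    intro v hv hw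
    have e := eigen S A hA v hv
    rw [← htheta] at e
    have e2 : (2*(k:ℚ) - 2*(wt v : ℚ)) * (∑ x ∈ S, sgn v x) = 0 := by
      linear_combination e
    rcases mul_eq_zero.mp e2 with h | h
    · exfalso
      apply hw
      have : (k:ℚ) = (wt v : ℚ) := by linarith
      exact_mod_cast this.symm
    · exact h
  have hset : {m | m ≤ n ∧ CorrImmune S m} = Set.Iic (k - 1) := by
    ext m
    simp only [Set.mem_setOf_eq, Set.mem_Iic]
    constructor
    · rintro ⟨hmn, himm⟩
      by_contra hgt
      push_neg at hgt
      have h2 : CorrImmune S k := immune_down S m hmn himm k (by omega)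
      exact hF₀ (F_zero_of_immune S v₀ hv₀ h2)
    · intro hm
      refine ⟨by omega, ?_⟩
      exact immune_of_F S m (fun v hv hwt => hFzero v hv (by omega))
  have hcor : cor S = k - 1 := by
    rw [cor, hset]
    exact csSup_Iic
  have hcast : ((cor S : ℚ)) + 1 = k := by
    rw [hcor]
    rw [Nat.cast_sub hk1]
    ring
  rw [nei_eq S ⟨x₀, hx₀⟩ A hA, hcast, rho]
  have hdeg : (A 1 1 : ℚ) + A 1 0 = n := by exact_mod_cast deg_sum S A hA hx₀
  have huniv : (univ : Finset (Fin n → Bool)).card = 2^n := by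
    rw [card_univ, Fintype.card_fun, Fintype.card_bool, Fintype.card_fin]
  have hle : S.card ≤ (univ : Finset (Fin n → Bool)).card :=
    Finset.card_le_card (subset_univ S)
  have hcard : S.card ≤ 2^n := by omega
  have hedge : (S.card : ℚ) * A 1 0 = ((2:ℚ)^n - S.card) * A 0 1 := by
    have h0 := edge_count S A hA
    have h2 : ((univ \ S).card : ℚ) = 2^n - S.card := by
      rw [Finset.card_sdiff_of_subset (subset_univ S), Nat.cast_sub hle, huniv]
      push_cast
      ring
    rw [← h2]
    exact_mod_cast h0
  have h2k : 2*(k:ℚ) = (A 1 0 : ℚ) + A 0 1 := by linarith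
  rw [show (2:ℚ) * (k:ℚ) = (A 1 0 : ℚ) + A 0 1 from h2k]
  field_simp
  linear_combination (2:ℚ)^n * hdeg - hedge
end

section
/- Let a = χ^S for S ⊆ E^n, and suppose there exists k such that the Fourier transform satisfies â(v) = 0 for every v ∈ E^n with wt(v) ∉ {0, k}. Then a is a perfect 2-coloring of E^n (i.e., there exists a matrix of parameters for which a is a perfect coloring). -/
open Finset

def ip {n : ℕ} (u v : Fin n → Bool) : ℕ :=
  (Finset.univ.filter fun i => u i = true ∧ v i = true).card
noncomputable def ch {n : ℕ} (u v : Fin n → Bool) : ℚ := (-1) ^ (ip u v)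

lemma ch_prod {n : ℕ} (u v : Fin n → Bool) :
    ch u v = ∏ i : Fin n, (if u i = true ∧ v i = true then (-1 : ℚ) else 1) := by
  rw [Finset.prod_ite, Finset.prod_const, Finset.prod_const_one, mul_one]; rfl

lemma sum_ch {n : ℕ} (u : Fin n → Bool) :
    ∑ v : Fin n → Bool, ch u v = if u = (fun _ => false) then (2 ^ n : ℚ) else 0 := by
  have : ∑ v : Fin n → Bool, ch u v
      = ∏ i : Fin n, ∑ b : Bool, (if u i = true ∧ b = true then (-1 : ℚ) else 1) := by
    rw [Finset.prod_univ_sum]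
    rw [← Fintype.piFinset_univ]
    exact Finset.sum_congr rfl fun v _ => ch_prod u v
  rw [this]
  by_cases hu : u = fun _ => false
  · subst hu
    simp
  · rw [if_neg hu]
    obtain ⟨i, hi⟩ : ∃ i, u i = true := by
      by_contra hc
      push_neg at hc
      exact hu (funext fun i => by simpa using hc i)
    apply Finset.prod_eq_zero (Finset.mem_univ i)
    simp [hi]

lemma ch_xor {n : ℕ} (u w v : Fin n → Bool) :
    ch (xorv u w) v = ch u v * ch w v := by
  rw [ch_prod, ch_prod, ch_prod, ← Finset.prod_mul_distrib]
  refine Finset.prod_congr rfl fun i _ => ?_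
  simp only [xorv]
  rcases Bool.eq_false_or_eq_true (u i) with h1 | h1 <;>
    rcases Bool.eq_false_or_eq_true (w i) with h2 | h2 <;>
    rcases Bool.eq_false_or_eq_true (v i) with h3 | h3 <;>
    simp [h1, h2, h3]

lemma xorv_eq_zero {n : ℕ} (u x : Fin n → Bool) :
    xorv u x = (fun _ => false) ↔ u = x := by
  constructor
  · intro hf
    funext i
    have := congrFun hf i
    simp only [xorv] at this
    rcases Bool.eq_false_or_eq_true (u i) with h1 | h1 <;>
      rcases Bool.eq_false_or_eq_true (x i) with h2 | h2 <;>
      simp_all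
  · rintro rfl; funext i; simp [xorv]

lemma fourierT_eq {n : ℕ} (a : (Fin n → Bool) → ℚ) (v : Fin n → Bool) :
    fourierT a v = ∑ u : Fin n → Bool, a u * ch u v := rfl

lemma inversion {n : ℕ} (a : (Fin n → Bool) → ℚ) (x : Fin n → Bool) :
    ∑ v : Fin n → Bool, fourierT a v * ch x v = 2 ^ n * a x := by
  have key : ∀ u : Fin n → Bool,
      ∑ v : Fin n → Bool, ch u v * ch x v
        = if u = x then (2 ^ n : ℚ) else 0 := by
    intro u
    have : ∀ v : Fin n → Bool, ch u v * ch x v = ch (xorv u x) v := fun v => (ch_xor u x v).symm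
    simp only [this]
    rw [sum_ch (xorv u x)]
    simp [xorv_eq_zero]
  simp only [fourierT_eq, Finset.sum_mul]
  rw [Finset.sum_comm]
  have : ∀ u : Fin n → Bool, ∑ v : Fin n → Bool, a u * ch u v * ch x v
      = a u * (if u = x then (2 ^ n : ℚ) else 0) := by
    intro u
    rw [← key u, Finset.mul_sum]
    simp [mul_assoc]
  simp only [this]
  rw [Finset.sum_eq_single x]
  · simp [mul_comm]
  · intro b _ hb; simp [hb]
  · intro hx; exact absurd (Finset.mem_univ x) hx



def ev (i : Fin n) : Fin n → Bool := fun j => decide (j = i)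

lemma ch_ev (i : Fin n) (v : Fin n → Bool) :
    ch (ev i) v = if v i = true then (-1 : ℚ) else 1 := by
  have hfil : (Finset.univ.filter fun j => ev i j = true ∧ v j = true)
      = if v i = true then {i} else ∅ := by
    by_cases hv : v i = true
    · rw [if_pos hv]
      ext j
      simp only [Finset.mem_filter, Finset.mem_univ, true_and, Finset.mem_singleton, ev,
        decide_eq_true_eq]
      constructor
      · rintro ⟨rfl, _⟩; rfl
      · rintro rfl; exact ⟨rfl, hv⟩
    · rw [if_neg hv]
      ext j
      simp only [Finset.mem_filter, Finset.mem_univ, true_and, Finset.notMem_empty, iff_false,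
        not_and, ev, decide_eq_true_eq]
      rintro rfl; exact fun hc => hv hc
  unfold ch ip
  rw [hfil]
  by_cases hv : v i = true <;> simp [hv]

lemma hd_one_iff (x y : Fin n → Bool) :
    hammingDist x y = 1 ↔ ∃ i, y = xorv x (ev i) := by
  rw [hammingDist]
  constructor
  · intro h1
    obtain ⟨i, hi⟩ := Finset.card_eq_one.mp h1
    refine ⟨i, funext fun j => ?_⟩
    by_cases hji : j = i
    · subst hji
      have hj : j ∈ Finset.univ.filter fun i => x i ≠ y i := by
        rw [hi]; exact Finset.mem_singleton_self j
      have : x j ≠ y j := (Finset.mem_filter.mp hj).2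
      simp only [xorv, ev, decide_eq_true_eq, if_pos rfl]
      rcases Bool.eq_false_or_eq_true (x j) with h | h <;>
        rcases Bool.eq_false_or_eq_true (y j) with h' | h' <;> simp_all
    · have hj : j ∉ Finset.univ.filter fun i => x i ≠ y i := by
        rw [hi]; simpa using hji
      have : x j = y j := by
        by_contra hc; exact hj (Finset.mem_filter.mpr ⟨Finset.mem_univ j, hc⟩)
      simp only [xorv, ev]
      rw [decide_eq_false hji]
      simpa using this.symm
  · rintro ⟨i, rfl⟩
    rw [Finset.card_eq_one]
    refine ⟨i, ?_⟩
    ext j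
    simp only [Finset.mem_filter, Finset.mem_univ, true_and, Finset.mem_singleton]
    simp only [xorv, ev]
    by_cases hji : j = i
    · subst hji
      cases hx : x j <;> simp [hx]
    · rw [decide_eq_false hji]
      simp [hji]

lemma xorv_ev_inj (x : Fin n → Bool) : Function.Injective (fun i => xorv x (ev i)) := by
  intro i i' hii
  by_contra hne
  have h2 := congrFun hii i
  simp only [xorv, ev] at h2
  rw [decide_eq_false hne] at h2
  cases hx : x i <;> simp [hx] at h2

lemma card_nbr (x : Fin n → Bool) (P : (Fin n → Bool) → Prop) [DecidablePred P] :
    (Finset.univ.filter fun y => hammingDist x y = 1 ∧ P y).card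
      = (Finset.univ.filter fun i => P (xorv x (ev i))).card := by
  refine (Finset.card_bij (fun i _ => xorv x (ev i)) ?_ ?_ ?_).symm
  · intro i hi
    simp only [Finset.mem_filter, Finset.mem_univ, true_and] at hi ⊢
    exact ⟨(hd_one_iff x _).mpr ⟨i, rfl⟩, hi⟩
  · intro i _ i' _ hii
    exact xorv_ev_inj x hii
  · intro y hy
    simp only [Finset.mem_filter, Finset.mem_univ, true_and] at hy
    obtain ⟨i, rfl⟩ := (hd_one_iff x y).mp hy.1
    exact ⟨i, by simpa using hy.2, rfl⟩


lemma sum_sign {n : ℕ} (v : Fin n → Bool) :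
    ∑ i : Fin n, (if v i = true then (-1 : ℚ) else 1) = (n : ℚ) - 2 * (wt v : ℚ) := by
  have : ∀ i : Fin n, (if v i = true then (-1 : ℚ) else 1)
      = 1 - 2 * (if v i = true then (1 : ℚ) else 0) := by
    intro i; by_cases hv : v i = true <;> simp [hv] <;> norm_num
  simp only [this]
  rw [Finset.sum_sub_distrib, Finset.sum_const, ← Finset.mul_sum, Finset.sum_boole]
  simp [wt]

lemma wt_zero_iff {n : ℕ} (v : Fin n → Bool) : wt v = 0 ↔ v = fun _ => false := by
  unfold wt
  rw [Finset.card_eq_zero, Finset.filter_eq_empty_iff]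
  constructor
  · intro hv; funext i
    have := hv (Finset.mem_univ i)
    simpa using this
  · rintro rfl i _; simp

lemma ch_zero {n : ℕ} (x : Fin n → Bool) : ch x (fun _ => false) = 1 := by
  unfold ch ip
  have : (Finset.univ.filter fun i => x i = true ∧ (fun _ : Fin n => false) i = true) = ∅ := by
    simp
  rw [this]; simp

lemma fourierT_zero {n : ℕ} (S : Finset (Fin n → Bool)) :
    fourierT (chi S) (fun _ => false) = (S.card : ℚ) := by
  unfold fourierT
  have : ∀ u : Fin n → Bool,
      (Finset.univ.filter fun i => u i = true ∧ (fun _ : Fin n => false) i = true) = ∅ := by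
    intro u; simp
  simp only [this, Finset.card_empty, pow_zero, mul_one]
  unfold chi
  rw [Finset.sum_boole]
  simp

theorem key {n : ℕ} (S : Finset (Fin n → Bool)) (k : ℕ)
    (h : ∀ v : Fin n → Bool, wt v ≠ 0 → wt v ≠ k → fourierT (chi S) v = 0)
    (x : Fin n → Bool) :
    (2 ^ n : ℚ) * ∑ i : Fin n, chi S (xorv x (ev i))
      = ((n : ℚ) - 2 * k) * (2 ^ n * chi S x) + 2 * k * S.card := by
  have step1 : (2 ^ n : ℚ) * ∑ i : Fin n, chi S (xorv x (ev i))
      = ∑ v : Fin n → Bool, fourierT (chi S) v * ch x v * ((n : ℚ) - 2 * (wt v : ℚ)) := by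
    rw [Finset.mul_sum]
    have : ∀ i : Fin n, (2 ^ n : ℚ) * chi S (xorv x (ev i))
        = ∑ v : Fin n → Bool, fourierT (chi S) v * ch x v * (if v i = true then (-1 : ℚ) else 1) := by
      intro i
      rw [← inversion (chi S) (xorv x (ev i))]
      refine Finset.sum_congr rfl fun v _ => ?_
      rw [ch_xor, ch_ev, mul_assoc]
    simp only [this]
    rw [Finset.sum_comm]
    refine Finset.sum_congr rfl fun v _ => ?_
    rw [← Finset.mul_sum, sum_sign]
  rw [step1]
  have split : ∀ v : Fin n → Bool,
      fourierT (chi S) v * ch x v * ((n : ℚ) - 2 * (wt v : ℚ))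
        = fourierT (chi S) v * ch x v * ((n : ℚ) - 2 * (k : ℚ))
          + fourierT (chi S) v * ch x v * (2 * (k : ℚ) - 2 * (wt v : ℚ)) := by
    intro v; ring
  simp only [split]
  rw [Finset.sum_add_distrib]
  congr 1
  · rw [← Finset.sum_mul, inversion]
    ring
  · rw [Finset.sum_eq_single (fun _ : Fin n => false)]
    · rw [fourierT_zero, ch_zero]
      have : wt (fun _ : Fin n => false) = 0 := by simp [wt]
      rw [this]
      push_cast
      ring
    · intro v _ hv
      by_cases h0 : wt v = 0
      · exact absurd ((wt_zero_iff v).mp h0) hv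
      by_cases hk : wt v = k
      · rw [hk]; ring
      · rw [h v h0 hk]; ring
    · intro hmem; exact absurd (Finset.mem_univ _) hmem

/-- If there is `k` such that `â(v) = 0` for every `v` with
`wt v ∉ {0, k}`, then `χ^S` is a perfect 2-coloring. -/
theorem stmt5 {n : ℕ} (S : Finset (Fin n → Bool)) (k : ℕ)
    (h : ∀ v : Fin n → Bool, wt v ≠ 0 → wt v ≠ k → fourierT (chi S) v = 0) :
    ∃ A : Fin 2 → Fin 2 → ℕ, IsPerfectColoring (chiCol S) A := by
  classical
  set Nb : (Fin n → Bool) → ℕ :=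
    fun x => (Finset.univ.filter fun y => hammingDist x y = 1 ∧ y ∈ S).card with hNb
  -- Nb as a rational sum
  have hNbQ : ∀ x : Fin n → Bool, (Nb x : ℚ) = ∑ i : Fin n, chi S (xorv x (ev i)) := by
    intro x
    rw [hNb]
    simp only [card_nbr x (fun y => y ∈ S)]
    unfold chi
    rw [Finset.sum_boole]
  -- constancy on colors
  have hconst : ∀ x x' : Fin n → Bool, (x ∈ S ↔ x' ∈ S) → Nb x = Nb x' := by
    intro x x' hxx
    have h1 := key S k h x
    have h2 := key S k h x'
    rw [← hNbQ x] at h1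
    rw [← hNbQ x'] at h2
    have hchi : chi S x = chi S x' := by
      unfold chi
      by_cases hx : x ∈ S
      · rw [if_pos hx, if_pos (hxx.mp hx)]
      · rw [if_neg hx, if_neg (fun hc => hx (hxx.mpr hc))]
    rw [hchi] at h1
    have h3 : (2 ^ n : ℚ) * (Nb x : ℚ) = (2 ^ n : ℚ) * (Nb x' : ℚ) := by
      rw [h1, h2]
    have h4 : (Nb x : ℚ) = (Nb x' : ℚ) :=
      mul_left_cancel₀ (by positivity) h3
    exact_mod_cast h4
  -- degree n
  have hdeg : ∀ x : Fin n → Bool,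
      (Finset.univ.filter fun y => hammingDist x y = 1).card = n := by
    intro x
    have : (Finset.univ.filter fun y => hammingDist x y = 1)
        = (Finset.univ.filter fun y => hammingDist x y = 1 ∧ True) := by simp
    rw [this, card_nbr x (fun _ => True)]
    simp
  -- complement count
  have hcompl : ∀ x : Fin n → Bool,
      (Finset.univ.filter fun y => hammingDist x y = 1 ∧ y ∉ S).card = n - Nb x := by
    intro x
    have hsplit := Finset.card_filter_add_card_filter_not
      (s := Finset.univ.filter fun y => hammingDist x y = 1) (p := fun y => y ∈ S)
    rw [Finset.filter_filter, Finset.filter_filter, hdeg x] at hsplit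
    have hNbx : (Finset.univ.filter fun y => hammingDist x y = 1 ∧ y ∈ S).card = Nb x := rfl
    rw [hNbx] at hsplit
    omega
  -- filter identities for colors
  have hfil1 : ∀ x : Fin n → Bool,
      (Finset.univ.filter fun y => hammingDist x y = 1 ∧ chiCol S y = 1)
        = (Finset.univ.filter fun y => hammingDist x y = 1 ∧ y ∈ S) := by
    intro x
    refine Finset.filter_congr fun y _ => ?_
    unfold chiCol
    by_cases hy : y ∈ S <;> simp [hy]
  have hfil0 : ∀ x : Fin n → Bool,
      (Finset.univ.filter fun y => hammingDist x y = 1 ∧ chiCol S y = 0)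
        = (Finset.univ.filter fun y => hammingDist x y = 1 ∧ y ∉ S) := by
    intro x
    refine Finset.filter_congr fun y _ => ?_
    unfold chiCol
    by_cases hy : y ∈ S <;> simp [hy]
  -- the parameters
  set c1 : ℕ := if hs : S.Nonempty then Nb hs.choose else 0 with hc1
  set c0 : ℕ := if hs : ∃ x : Fin n → Bool, x ∉ S then Nb hs.choose else 0 with hc0
  have hc1x : ∀ x : Fin n → Bool, x ∈ S → Nb x = c1 := by
    intro x hx
    have hs : S.Nonempty := ⟨x, hx⟩
    rw [hc1, dif_pos hs]
    exact hconst x hs.choose (iff_of_true hx hs.choose_spec)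
  have hc0x : ∀ x : Fin n → Bool, x ∉ S → Nb x = c0 := by
    intro x hx
    have hs : ∃ x : Fin n → Bool, x ∉ S := ⟨x, hx⟩
    rw [hc0, dif_pos hs]
    exact hconst x hs.choose (iff_of_false hx hs.choose_spec)
  refine ⟨fun i j => if i = 1 then (if j = 1 then c1 else n - c1)
    else (if j = 1 then c0 else n - c0), ?_⟩
  intro x j
  by_cases hx : x ∈ S
  · have hCol : chiCol S x = 1 := if_pos hx
    rw [hCol]
    fin_cases j
    · norm_num
      rw [hfil0 x, hcompl x, hc1x x hx]
    · norm_num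
      rw [hfil1 x]
      exact hc1x x hx
  · have hCol : chiCol S x = 0 := if_neg hx
    rw [hCol]
    fin_cases j
    · norm_num
      rw [hfil0 x, hcompl x, hc0x x hx]
    · norm_num
      rw [hfil1 x]
      exact hc0x x hx
end
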